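/- Universal approximation property of one-dimensional Cauchy kernels: For every compact interval I ⊆ ℝ, every continuous function g : I → ℝ, and every ε > 0, there exist a natural number m ≥ 1, complex numbers ξ_1, …, ξ_m ∈ ℂ each with strictly positive imaginary part, and complex parameters λ_1, …, λ_m ∈ ℂ such that sup_{x ∈ I} |g(x) − Re(∑_{k=1}^m λ_k / (ξ_k − x))| < ε. Equivalently, the family of functions { x ↦ Re(λ / (ξ − x)) : λ ∈ ℂ, ξ ∈ ℂ, Im ξ > 0 } has the universal approximation property on ℝ. -/

import Mathlib

open scoped BigOperators

namespace CauchyUAT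

lemma sub_ne (ξ : ℂ) (hξ : 0 < ξ.im) (x : ℝ) : ξ - (x : ℂ) ≠ 0 := by
  intro h
  have h2 : (ξ - (x : ℂ)).im = 0 := by rw [h]; simp
  simp [Complex.sub_im, Complex.ofReal_im] at h2
  linarith

noncomputable def mon (a b : ℝ) (n : ℕ) : C(Set.Icc a b, ℝ) :=
  ⟨fun x => (x : ℝ) ^ n, (continuous_subtype_val.pow n)⟩

noncomputable def ker (a b : ℝ) (ξ lam : ℂ) (hξ : 0 < ξ.im) : C(Set.Icc a b, ℝ) :=
  ⟨fun x => (lam / (ξ - ((x : ℝ) : ℂ))).re,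
   Complex.continuous_re.comp <| Continuous.div continuous_const
     (continuous_const.sub (Complex.continuous_ofReal.comp continuous_subtype_val))
     (fun x => sub_ne ξ hξ x)⟩

noncomputable def M (a b : ℝ) : Submodule ℝ C(Set.Icc a b, ℝ) where
  carrier := {f | ∃ m : ℕ, ∃ ξ lam : Fin m → ℂ, (∀ k, 0 < (ξ k).im) ∧
    ∀ x : Set.Icc a b, f x = (∑ k, lam k / (ξ k - ((x : ℝ) : ℂ))).re}
  zero_mem' := ⟨0, (fun k => k.elim0), (fun k => k.elim0), fun k => k.elim0, fun x => by simp⟩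
  add_mem' := by
    rintro f g ⟨m1, ξ1, l1, h1, e1⟩ ⟨m2, ξ2, l2, h2, e2⟩
    refine ⟨m1 + m2, Fin.append ξ1 ξ2, Fin.append l1 l2, ?_, fun x => ?_⟩
    · intro k
      refine Fin.addCases (fun i => ?_) (fun i => ?_) k
      · rw [Fin.append_left]; exact h1 i
      · rw [Fin.append_right]; exact h2 i
    · rw [Fin.sum_univ_add]
      simp only [Fin.append_left, Fin.append_right, Complex.add_re,
        ContinuousMap.add_apply, e1 x, e2 x]
  smul_mem' := by
    rintro c f ⟨m, ξ, l, h, e⟩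
    refine ⟨m, ξ, fun k => (c : ℂ) * l k, h, fun x => ?_⟩
    have : (∑ k, ((c : ℂ) * l k) / (ξ k - ((x : ℝ) : ℂ)))
        = (c : ℂ) * ∑ k, l k / (ξ k - ((x : ℝ) : ℂ)) := by
      rw [Finset.mul_sum]; exact Finset.sum_congr rfl fun k _ => by ring
    simp [this, e x, Complex.re_ofReal_mul]


lemma ker_mem (a b : ℝ) (ξ lam : ℂ) (hξ : 0 < ξ.im) : ker a b ξ lam hξ ∈ M a b :=
  ⟨1, fun _ => ξ, fun _ => lam, fun _ => hξ, fun x => by simp [ker]⟩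

lemma key (ξ : ℂ) (x : ℂ) (hd : ξ - x ≠ 0) (n : ℕ) :
    ξ ^ (n + 1) / (ξ - x)
      = (∑ i ∈ Finset.range (n + 1), ξ ^ i * x ^ (n - i)) + x ^ (n + 1) / (ξ - x) := by
  have h2 : (∑ i ∈ Finset.range (n + 1), ξ ^ i * x ^ (n + 1 - 1 - i)) * (ξ - x)
      = ξ ^ (n + 1) - x ^ (n + 1) := geom_sum₂_mul ξ x (n + 1)
  simp only [Nat.add_sub_cancel] at h2
  field_simp
  linear_combination -h2

lemma mon_mem (a b : ℝ) (n : ℕ) : mon a b n ∈ (M a b).topologicalClosure := by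
  induction n using Nat.strong_induction_on with
  | _ n ih =>
  set C : ℝ := max |a| |b| with hC
  have hC0 : 0 ≤ C := le_max_iff.2 (Or.inl (abs_nonneg a))
  have hxC : ∀ x : Set.Icc a b, |(x : ℝ)| ≤ C := by
    rintro ⟨x, hx1, hx2⟩
    simp only [abs_le]
    constructor
    · calc -C ≤ -|a| := by simp [hC]
        _ ≤ a := neg_abs_le a
        _ ≤ x := hx1
    · calc x ≤ b := hx2
        _ ≤ |b| := le_abs_self b
        _ ≤ C := le_max_right _ _
  -- the poles
  set ξ : ℕ → ℂ := fun N => Complex.I * ((N : ℝ) + 1) with hξdef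
  have hξim : ∀ N, 0 < (ξ N).im := by
    intro N
    simp [hξdef, Complex.mul_im]
    positivity
  -- the approximating sequence
  set h : ℕ → C(Set.Icc a b, ℝ) := fun N =>
    ker a b (ξ N) ((ξ N) ^ (n + 1)) (hξim N)
      - ∑ i ∈ Finset.range n, ((ξ N) ^ (i + 1)).re • mon a b (n - (i + 1)) with hdef
  have hmem : ∀ N, h N ∈ (M a b).topologicalClosure := by
    intro N
    refine Submodule.sub_mem _ (Submodule.le_topologicalClosure _ (ker_mem _ _ _ _ _)) ?_
    refine Submodule.sum_mem _ fun i hi => Submodule.smul_mem _ _ ?_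
    exact ih _ (Nat.sub_lt (lt_of_lt_of_le (Nat.succ_pos i)
      (Nat.succ_le_of_lt (Finset.mem_range.1 hi))) (Nat.succ_pos i))
  have hpt : ∀ N, ∀ x : Set.Icc a b,
      h N x = (x : ℝ) ^ n + (((x : ℝ) : ℂ) ^ (n + 1) / (ξ N - ((x : ℝ) : ℂ))).re := by
    intro N x
    have hd : ξ N - ((x : ℝ) : ℂ) ≠ 0 := sub_ne _ (hξim N) _
    have hk := key (ξ N) (((x : ℝ) : ℂ)) hd n
    simp only [hdef, ContinuousMap.sub_apply, ContinuousMap.coe_sum, Finset.sum_apply,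
      ContinuousMap.smul_apply, ker, ContinuousMap.coe_mk, smul_eq_mul]
    rw [hk]
    rw [Complex.add_re]
    have hsum : (∑ i ∈ Finset.range (n + 1), (ξ N) ^ i * ((x : ℝ) : ℂ) ^ (n - i)).re
        = (x : ℝ) ^ n + ∑ i ∈ Finset.range n, ((ξ N) ^ (i + 1)).re * (x : ℝ) ^ (n - (i + 1)) := by
      rw [Complex.re_sum, Finset.sum_range_succ', add_comm]
      congr 1
      · simp [← Complex.ofReal_pow]
      · exact Finset.sum_congr rfl fun i _ => by
          rw [← Complex.ofReal_pow, Complex.re_mul_ofReal]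
    rw [hsum]
    simp [mon]
    ring
  have hdist : ∀ N, dist (h N) (mon a b n) ≤ C ^ (n + 1) / ((N : ℝ) + 1) := by
    intro N
    rw [ContinuousMap.dist_le (by positivity)]
    intro x
    rw [Real.dist_eq, hpt N x]
    simp only [mon, ContinuousMap.coe_mk, add_sub_cancel_left]
    calc |(((x : ℝ) : ℂ) ^ (n + 1) / (ξ N - ((x : ℝ) : ℂ))).re|
        ≤ ‖(((x : ℝ) : ℂ) ^ (n + 1) / (ξ N - ((x : ℝ) : ℂ)))‖ := Complex.abs_re_le_norm _
      _ = |(x : ℝ)| ^ (n + 1) / ‖(ξ N - ((x : ℝ) : ℂ))‖ := by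
          rw [norm_div, norm_pow, Complex.norm_real, Real.norm_eq_abs]
      _ ≤ C ^ (n + 1) / ((N : ℝ) + 1) := by
          apply div_le_div₀ (by positivity) (pow_le_pow_left₀ (abs_nonneg _) (hxC x) _) (by positivity)
          have him : (ξ N - ((x : ℝ) : ℂ)).im = (N : ℝ) + 1 := by
            simp [hξdef, Complex.mul_im]
          calc (N : ℝ) + 1 ≤ |(ξ N - ((x : ℝ) : ℂ)).im| := by
                rw [him]; exact le_abs_self _
            _ ≤ ‖_‖ := Complex.abs_im_le_norm _
  have htend : Filter.Tendsto h Filter.atTop (nhds (mon a b n)) := by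
    rw [tendsto_iff_dist_tendsto_zero]
    apply squeeze_zero (fun N => dist_nonneg) hdist
    have : Filter.Tendsto (fun N : ℕ => C ^ (n + 1) * (1 / ((N : ℝ) + 1))) Filter.atTop (nhds (C ^ (n+1) * 0)) :=
      (tendsto_one_div_add_atTop_nhds_zero_nat).const_mul _
    simpa [div_eq_mul_inv, one_div] using this
  exact (Submodule.isClosed_topologicalClosure _).mem_of_tendsto htend
    (Filter.Eventually.of_forall hmem)


lemma all_mem (a b : ℝ) (f : C(Set.Icc a b, ℝ)) : f ∈ (M a b).topologicalClosure := by
  have hpoly : (polynomialFunctions (Set.Icc a b) : Set C(Set.Icc a b, ℝ))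
      ⊆ ((M a b).topologicalClosure : Set C(Set.Icc a b, ℝ)) := by
    rw [polynomialFunctions_coe]
    rintro _ ⟨p, rfl⟩
    have : (Polynomial.toContinuousMapOnAlgHom (Set.Icc a b)) p
        = ∑ i ∈ Finset.range (p.natDegree + 1), p.coeff i • mon a b i := by
      ext x
      simp only [Polynomial.toContinuousMapOnAlgHom_apply, Polynomial.toContinuousMapOn_apply,
        Polynomial.toContinuousMap_apply, ContinuousMap.coe_sum, Finset.sum_apply,
        ContinuousMap.smul_apply, mon, ContinuousMap.coe_mk, smul_eq_mul]
      exact Polynomial.eval_eq_sum_range _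
    rw [this]
    exact Submodule.sum_mem _ fun i _ => Submodule.smul_mem _ _ (mon_mem a b i)
  have htop := polynomialFunctions_closure_eq_top a b
  have hf : f ∈ (polynomialFunctions (Set.Icc a b)).topologicalClosure := by
    rw [htop]; trivial
  have hclosure : f ∈ closure (polynomialFunctions (Set.Icc a b) : Set C(Set.Icc a b, ℝ)) := hf
  have := closure_minimal hpoly (Submodule.isClosed_topologicalClosure _)
  exact this hclosure

end CauchyUAT

open CauchyUAT in
/-- **Universal approximation property of one-dimensional Cauchy kernels.**
Every continuous function on a compact interval `[a, b] ⊆ ℝ` can be uniformly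
approximated by the real part of finite combinations of Cauchy kernels
`x ↦ λ/(ξ − x)` with poles `ξ` in the upper half-plane. -/
theorem cauchy_kernel_universal_approximation (a b : ℝ)
    (g : ℝ → ℝ) (hg : ContinuousOn g (Set.Icc a b)) :
    ∀ ε > 0, ∃ m : ℕ, 1 ≤ m ∧
      ∃ (ξ : Fin m → ℂ) (lam : Fin m → ℂ),
        (∀ k, 0 < (ξ k).im) ∧
        ∀ x ∈ Set.Icc a b, |g x - (∑ k, lam k / (ξ k - (x : ℂ))).re| < ε := by
  intro ε hε
  set g' : C(Set.Icc a b, ℝ) := ⟨Set.restrict _ g, hg.restrict⟩ with hg'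
  have hmem : g' ∈ closure ((M a b) : Set C(Set.Icc a b, ℝ)) := by
    exact all_mem a b g'
  rw [Metric.mem_closure_iff] at hmem
  obtain ⟨f, hfM, hdist⟩ := hmem ε hε
  obtain ⟨m, ξ, lam, hpos, heq⟩ := hfM
  refine ⟨m + 1, Nat.le_add_left 1 m, (Fin.cons Complex.I ξ : Fin (m+1) → ℂ), (Fin.cons 0 lam : Fin (m+1) → ℂ), ?_, ?_⟩
  · intro k
    refine Fin.cases ?_ ?_ k
    · simp
    · exact fun i => hpos i
  · intro x hx
    have hval : (∑ k : Fin (m + 1),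
        (Fin.cons (0 : ℂ) lam : Fin (m + 1) → ℂ) k /
          ((Fin.cons Complex.I ξ : Fin (m + 1) → ℂ) k - (x : ℂ))).re
        = f ⟨x, hx⟩ := by
      rw [Fin.sum_univ_succ]
      simp [heq ⟨x, hx⟩]
    rw [hval]
    have : |g x - f ⟨x, hx⟩| = dist (g' ⟨x, hx⟩) (f ⟨x, hx⟩) := by
      rw [Real.dist_eq]; rfl
    rw [this]
    exact lt_of_le_of_lt (ContinuousMap.dist_apply_le_dist _) hdist
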